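/- arXiv:1310.7738 — 6 statements merged into one kernel-verified Lean document; each statement's English description precedes it below -/
import Mathlib

section
/- Let E be a finite-dimensional k-vector space and T an endomorphism of E whose annihilator polynomial is a_T(x) = p(x)^n with p(x) monic irreducible of degree d, and let K = k[x]/(p(x)). Fix 1 ≤ i ≤ n and set W_i = Ker p(T)^{i-1} + p(T)(Ker p(T)^{i+1}), with π_i : Ker p(T)^i → Ker p(T)^i / W_i the natural projection. If {ē_h}_{1≤h≤ν} is a basis of Ker p(T)^i / W_i as a K-vector space and {e_h}_{1≤h≤ν} are vectors of Ker p(T)^i with π_i(e_h) = ē_h for all h, then the family ⋃_{1≤h≤ν} {e_h, T(e_h), T²(e_h), …, T^{d-1}(e_h)} is linearly independent over k in Ker p(T)^i. -/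
open Polynomial Module

universe u v w

section Preamble

variable {k : Type u} [Field k] {V : Type v} [AddCommGroup V] [Module k V]

/-- `Ker p(f)^i`, as a `k[X]`-submodule of `V` viewed as a `k[X]`-module via `f`
(i.e. of the type synonym `Module.AEval' f`, on which `q(x) • v = q(f)(v)`). -/
noncomputable def kerP (f : Module.End k V) (p : k[X]) (i : ℕ) :
    Submodule k[X] (Module.AEval' f) :=
  Submodule.torsionBy k[X] (Module.AEval' f) (p ^ i)

/-- `W_i = Ker p(f)^{i-1} + p(f)(Ker p(f)^{i+1})`, as a `k[X]`-submodule. -/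
noncomputable def wSub (f : Module.End k V) (p : k[X]) (i : ℕ) :
    Submodule k[X] (Module.AEval' f) :=
  kerP f p (i - 1) ⊔ (kerP f p (i + 1)).map (LinearMap.lsmul k[X] (Module.AEval' f) p)

/-- The quotient `Ker p(f)^i / (Ker p(f)^{i-1} + p(f)(Ker p(f)^{i+1}))`, as a `k[X]`-module. -/
abbrev Qmod (f : Module.End k V) (p : k[X]) (i : ℕ) : Type v :=
  kerP f p i ⧸ (wSub f p i).comap (kerP f p i).subtype

theorem qmod_isTorsionBy (f : Module.End k V) (p : k[X]) (i : ℕ) :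
    Module.IsTorsionBy k[X] (Qmod f p i) p := by
  intro x
  obtain ⟨⟨v, hv⟩, rfl⟩ := Submodule.Quotient.mk_surjective _ x
  rw [← Submodule.Quotient.mk_smul, Submodule.Quotient.mk_eq_zero]
  refine Submodule.mem_comap.mpr (Submodule.mem_sup_right ?_)
  refine Submodule.mem_map.mpr ⟨v, ?_, by simp⟩
  rw [kerP, Submodule.mem_torsionBy_iff] at hv ⊢
  rw [pow_succ', mul_smul, hv, smul_zero]

/-- The `K = k[x]/(p(x))`-vector space structure on
`Ker p(f)^i / (Ker p(f)^{i-1} + p(f)(Ker p(f)^{i+1}))`, induced by the `k[x]`-module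
structure `q(x) • v = q(f)(v)`. -/
noncomputable instance qmodModule (f : Module.End k V) (p : k[X]) (i : ℕ) :
    Module (k[X] ⧸ Ideal.span {p}) (Qmod f p i) :=
  (qmod_isTorsionBy f p i).module

/-- The invariant `ν_i(V, p(f))`: the dimension of
`Ker p(f)^i / (Ker p(f)^{i-1} + p(f)(Ker p(f)^{i+1}))` as a vector space over
`K = k[x]/(p(x))`. -/
noncomputable def nu (f : Module.End k V) (p : k[X]) (i : ℕ) : Cardinal.{v} :=
  Module.rank (k[X] ⧸ Ideal.span {p}) (Qmod f p i)

end Preamble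

/-- Let `E` be a finite-dimensional `k`-vector space and `T` an endomorphism
of `E` whose annihilator polynomial is `a_T(x) = p(x)^n` with `p(x)` monic irreducible of
degree `d`, and let `K = k[x]/(p(x))`.  Fix `1 ≤ i ≤ n` and set
`W_i = Ker p(T)^{i-1} + p(T)(Ker p(T)^{i+1})`, with `π_i` the natural projection onto
`Ker p(T)^i / W_i`.  If `{ē_h}_{1 ≤ h ≤ ν}` is a `K`-basis of `Ker p(T)^i / W_i` and
`{e_h}_{1 ≤ h ≤ ν}` are vectors of `Ker p(T)^i` with `π_i(e_h) = ē_h` for all `h`, then the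
family `⋃_h {e_h, T e_h, …, T^{d-1} e_h}` is linearly independent over `k`. -/
theorem stmt_0 {k : Type u} [Field k] {E : Type v} [AddCommGroup E] [Module k E]
    [FiniteDimensional k E]
    (T : Module.End k E) (p : k[X]) (n d : ℕ)
    (hmonic : p.Monic) (hirr : Irreducible p) (hdeg : p.natDegree = d)
    (hmin : minpoly k T = p ^ n)
    (i : ℕ) (hi1 : 1 ≤ i) (hin : i ≤ n)
    (ν : ℕ) (e : Fin ν → E)
    (he : ∀ h, Module.AEval'.of T (e h) ∈ kerP T p i)
    (b : Basis (Fin ν) (k[X] ⧸ Ideal.span {p}) (Qmod T p i))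
    (hb : ∀ h, b h = Submodule.Quotient.mk ⟨Module.AEval'.of T (e h), he h⟩) :
    LinearIndependent k fun hm : Fin ν × Fin d => (T ^ (hm.2 : ℕ)) (e hm.1) := by
  rw [Fintype.linearIndependent_iff]
  intro g hg hm
  -- package the coefficients of each `h` into a polynomial of degree < d
  set q : Fin ν → k[X] := fun h => ∑ j : Fin d, Polynomial.monomial (j : ℕ) (g (h, j)) with hq
  have hqdeg : ∀ h, (q h).degree < p.degree := by
    intro h
    have h1 : (q h).degree < ((d : ℕ) : WithBot ℕ) := by
      apply lt_of_le_of_lt (Polynomial.degree_sum_le _ _)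
      rw [Finset.sup_lt_iff (by exact_mod_cast WithBot.bot_lt_coe d)]
      intro j _
      exact lt_of_le_of_lt (Polynomial.degree_monomial_le _ _) (by exact_mod_cast j.2)
    rw [Polynomial.degree_eq_natDegree hmonic.ne_zero, hdeg]
    exact h1
  -- the polynomial combination kills e h
  have haeval : ∀ h, (Polynomial.aeval T (q h)) (e h) = ∑ j : Fin d, g (h, j) • (T ^ (j : ℕ)) (e h) := by
    intro h
    rw [hq, map_sum, LinearMap.sum_apply]
    refine Finset.sum_congr rfl fun j _ => ?_
    simp [Polynomial.aeval_monomial, Module.End.mul_apply, Module.algebraMap_end_apply]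
  -- the polynomial combination vanishes in AEval'
  have key : (∑ h : Fin ν, q h • Module.AEval'.of T (e h)) = 0 := by
    have h3 : ∑ h : Fin ν, q h • Module.AEval'.of T (e h)
        = Module.AEval'.of T (∑ h : Fin ν, (Polynomial.aeval T (q h)) (e h)) := by
      rw [map_sum]
      refine Finset.sum_congr rfl fun h _ => ?_
      rfl
    have h2 : ∑ h : Fin ν, (Polynomial.aeval T (q h)) (e h) = 0 := by
      rw [← hg, Fintype.sum_prod_type]
      exact Finset.sum_congr rfl fun h _ => haeval h
    rw [h3, h2, map_zero]
  -- form the sum inside the submodule kerP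
  set s : kerP T p i := ∑ h : Fin ν, q h • (⟨Module.AEval'.of T (e h), he h⟩ : kerP T p i) with hs
  have hs0 : s = 0 := by
    apply Subtype.ext
    rw [hs]
    push_cast [Submodule.coe_sum, Submodule.coe_smul]
    simpa using key
  -- project to the quotient and use linear independence of b over K
  have hQ : ∑ h : Fin ν, (Ideal.Quotient.mk (Ideal.span {p}) (q h)) • b h = 0 := by
    have hproj := congrArg ((wSub T p i).comap (kerP T p i).subtype).mkQ hs0
    rw [hs, map_sum, map_zero] at hproj
    simp only [map_smul, Submodule.mkQ_apply] at hproj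
    rw [← hproj]
    refine Finset.sum_congr rfl fun h _ => ?_
    rw [hb h, (qmod_isTorsionBy T p i).mk_smul]
  have hbase := Fintype.linearIndependent_iff.mp b.linearIndependent _ hQ
  have hq0 : q hm.1 = 0 := by
    have h4 := hbase hm.1
    rw [Ideal.Quotient.eq_zero_iff_mem, Ideal.mem_span_singleton] at h4
    exact Polynomial.eq_zero_of_dvd_of_degree_lt h4 (hqdeg hm.1)
  have hc := congrArg (fun r => Polynomial.coeff r (hm.2 : ℕ)) hq0
  simp only [hq, Polynomial.finset_sum_coeff, Polynomial.coeff_monomial,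
    Polynomial.coeff_zero] at hc
  rw [Finset.sum_eq_single hm.2] at hc
  · simpa using hc
  · intro j _ hj
    rw [if_neg (by simpa [Fin.val_eq_val] using hj)]
  · simp
end

section
/- Let E be a finite-dimensional k-vector space and T an endomorphism of E whose annihilator polynomial is a_T(x) = p(x)^n with p(x) monic irreducible of degree d, and let K = k[x]/(p(x)). Fix 1 ≤ i ≤ n and set W_i = Ker p(T)^{i-1} + p(T)(Ker p(T)^{i+1}), with π_i the natural projection onto Ker p(T)^i / W_i. If {e_h}_{1≤h≤ν} ⊆ Ker p(T)^i are vectors whose images {π_i(e_h)} form a K-basis of Ker p(T)^i / W_i, then the k-subspace H_i = span_k ⋃_{1≤h≤ν} {e_h, T(e_h), …, T^{d-1}(e_h)} is a complementary subspace of W_i in Ker p(T)^i, i.e. Ker p(T)^i = W_i ⊕ H_i. -/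
open Polynomial Module

universe u v w

section Aux

set_option synthInstance.maxHeartbeats 1000000
set_option maxHeartbeats 1000000

variable {k : Type u} [Field k] {E : Type v} [AddCommGroup E] [Module k E]

lemma mem_kerP_iff (T : Module.End k E) (p : k[X]) (j : ℕ) (v : E) :
    Module.AEval'.of T v ∈ kerP T p j ↔ v ∈ LinearMap.ker (aeval T p ^ j) := by
  rw [kerP, Submodule.mem_torsionBy_iff, LinearMap.mem_ker, ← Module.AEval.of_aeval_smul,
    map_pow, Module.End.smul_def]
  exact (LinearEquiv.map_eq_zero_iff _)

lemma smul_of (T : Module.End k E) (q : k[X]) (v : E) :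
    q • (Module.AEval'.of T v) = Module.AEval'.of T (aeval T q v) := by
  rw [← Module.AEval.of_aeval_smul, Module.End.smul_def]

lemma mem_wSub_iff (T : Module.End k E) (p : k[X]) (i : ℕ) (v : E) :
    Module.AEval'.of T v ∈ wSub T p i ↔
      v ∈ (LinearMap.ker (aeval T p ^ (i - 1)) ⊔
        (LinearMap.ker (aeval T p ^ (i + 1))).map (aeval T p)) := by
  rw [wSub, Submodule.mem_sup, Submodule.mem_sup]
  constructor
  · rintro ⟨y, hy, z, ⟨w, hw, rfl⟩, hsum⟩
    refine ⟨(Module.AEval'.of T).symm y, ?_, aeval T p ((Module.AEval'.of T).symm w), ?_, ?_⟩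
    · rw [← mem_kerP_iff T p]; simpa using hy
    · exact ⟨_, (mem_kerP_iff T p _ _).mp (by simpa using hw), rfl⟩
    · apply (Module.AEval'.of T).injective
      simp only [map_add, LinearEquiv.apply_symm_apply]
      rw [← smul_of]
      simpa using hsum
  · rintro ⟨y, hy, z, ⟨w, hw, rfl⟩, rfl⟩
    refine ⟨Module.AEval'.of T y, (mem_kerP_iff T p _ _).mpr hy,
      Module.AEval'.of T (aeval T p w), ⟨Module.AEval'.of T w, (mem_kerP_iff T p _ _).mpr hw, ?_⟩,
      ?_⟩
    · simpa using (smul_of T p w)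
    · rw [← map_add]

instance qmodTower (f : Module.End k E) (p : k[X]) (i : ℕ) :
    IsScalarTower k (k[X] ⧸ Ideal.span {p}) (Qmod f p i) :=
  ⟨fun b d x => Quotient.inductionOn' d fun c => (smul_assoc b c x : _)⟩

noncomputable def kbasis (p : k[X]) (hp : p.Monic) :
    Basis (Fin p.natDegree) k (k[X] ⧸ Ideal.span {p}) :=
  (AdjoinRoot.powerBasis' hp).basis

lemma kbasis_apply (p : k[X]) (hp : p.Monic) (j : Fin p.natDegree) :
    kbasis p hp j = Ideal.Quotient.mk (Ideal.span {p}) (X ^ (j : ℕ)) := by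
  show (AdjoinRoot.powerBasis' hp).basis j = AdjoinRoot.mk p (X ^ (j : ℕ))
  refine ((AdjoinRoot.powerBasis' hp).basis_eq_pow j).trans ?_
  rw [AdjoinRoot.powerBasis'_gen, map_pow, AdjoinRoot.mk_X]

end Aux


set_option synthInstance.maxHeartbeats 1000000 in
set_option maxHeartbeats 2000000 in
/-- Let `E` be a finite-dimensional `k`-vector space and `T` an endomorphism
of `E` whose annihilator polynomial is `a_T(x) = p(x)^n` with `p(x)` monic irreducible of
degree `d`, and let `K = k[x]/(p(x))`.  Fix `1 ≤ i ≤ n` and set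
`W_i = Ker p(T)^{i-1} + p(T)(Ker p(T)^{i+1})`.  If `{e_h}_{1 ≤ h ≤ ν} ⊆ Ker p(T)^i` are
vectors whose images under the natural projection form a `K`-basis of `Ker p(T)^i / W_i`,
then `H_i = span_k ⋃_h {e_h, T e_h, …, T^{d-1} e_h}` is a complementary subspace of `W_i` in
`Ker p(T)^i`, i.e. `Ker p(T)^i = W_i ⊕ H_i`. -/
theorem stmt_1 {k : Type u} [Field k] {E : Type v} [AddCommGroup E] [Module k E]
    [FiniteDimensional k E]
    (T : Module.End k E) (p : k[X]) (n d : ℕ)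
    (hmonic : p.Monic) (hirr : Irreducible p) (hdeg : p.natDegree = d)
    (hmin : minpoly k T = p ^ n)
    (i : ℕ) (hi1 : 1 ≤ i) (hin : i ≤ n)
    (ν : ℕ) (e : Fin ν → E)
    (he : ∀ h, Module.AEval'.of T (e h) ∈ kerP T p i)
    (b : Basis (Fin ν) (k[X] ⧸ Ideal.span {p}) (Qmod T p i))
    (hb : ∀ h, b h = Submodule.Quotient.mk ⟨Module.AEval'.of T (e h), he h⟩)
    (H : Submodule k E)
    (hH : H = Submodule.span k
      (Set.range fun hm : Fin ν × Fin d => (T ^ (hm.2 : ℕ)) (e hm.1))) :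
    Disjoint (LinearMap.ker (aeval T p ^ (i - 1)) ⊔
        (LinearMap.ker (aeval T p ^ (i + 1))).map (aeval T p)) H ∧
      (LinearMap.ker (aeval T p ^ (i - 1)) ⊔
          (LinearMap.ker (aeval T p ^ (i + 1))).map (aeval T p)) ⊔ H
        = LinearMap.ker (aeval T p ^ i) := by
  subst hH
  set W' := LinearMap.ker (aeval T p ^ (i - 1)) ⊔
      (LinearMap.ker (aeval T p ^ (i + 1))).map (aeval T p) with hW'
  set Ker' := LinearMap.ker (aeval T p ^ i) with hKer'
  set π := ((wSub T p i).comap (kerP T p i).subtype).mkQ with hπ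
  -- commuting powers
  have hcommute : ∀ j m : ℕ, (aeval T p ^ m) * (T ^ j) = (T ^ j) * (aeval T p ^ m) := by
    intro j m
    have h1 : Commute (aeval T p) (aeval T X) := (Commute.all p X).map (aeval T)
    rw [aeval_X] at h1
    exact (h1.pow_pow m j).eq
  -- membership of the generators
  have hmemE : ∀ (h : Fin ν) (j : ℕ), (T ^ j) (e h) ∈ Ker' := by
    intro h j
    have h0 : (aeval T p ^ i) (e h) = 0 := (mem_kerP_iff T p i (e h)).mp (he h)
    rw [hKer', LinearMap.mem_ker, ← Module.End.mul_apply, hcommute, Module.End.mul_apply, h0,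
      map_zero]
  have hmem : ∀ (h : Fin ν) (j : ℕ), Module.AEval'.of T ((T ^ j) (e h)) ∈ kerP T p i :=
    fun h j => (mem_kerP_iff T p i _).mpr (hmemE h j)
  -- the k-linear map Φ
  set Φ : ↥Ker' →ₗ[k] Qmod T p i :=
    { toFun := fun y => π ⟨Module.AEval'.of T (y : E), (mem_kerP_iff T p i _).mpr y.2⟩
      map_add' := fun y z => by
        rw [← map_add]; exact congrArg π (Subtype.ext (by simp))
      map_smul' := fun a y => by
        rw [RingHom.id_apply, ← LinearMap.map_smul_of_tower]
        exact congrArg π (Subtype.ext (by simp)) } with hΦ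
  have hΦzero : ∀ y : ↥Ker', (Φ y = 0 ↔ (y : E) ∈ W') := by
    intro y
    rw [hΦ]
    show π ⟨Module.AEval'.of T (y : E), _⟩ = 0 ↔ _
    rw [hπ, Submodule.mkQ_apply, Submodule.Quotient.mk_eq_zero, Submodule.mem_comap]
    exact mem_wSub_iff T p i y
  -- the combined k-basis of Qmod
  set kb : Basis (Fin d) k (k[X] ⧸ Ideal.span {p}) :=
    (kbasis p hmonic).reindex (finCongr hdeg) with hkb
  set cb : Basis (Fin d × Fin ν) k (Qmod T p i) := kb.smulTower b with hcb
  have hΦbasis : ∀ (j : Fin d) (h : Fin ν),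
      Φ ⟨(T ^ (j : ℕ)) (e h), hmemE h j⟩ = cb (j, h) := by
    intro j h
    rw [hcb, Basis.smulTower_apply, hkb, Module.Basis.reindex_apply, kbasis_apply]
    have hval : (((finCongr hdeg).symm j : Fin p.natDegree) : ℕ) = (j : ℕ) := rfl
    rw [hval]
    have hmk : (Ideal.Quotient.mk (Ideal.span {p}) (X ^ (j : ℕ))) • b h
        = (X ^ (j : ℕ) : k[X]) • b h := rfl
    rw [hmk, hb h]
    have : (Submodule.Quotient.mk ⟨Module.AEval'.of T (e h), he h⟩ : Qmod T p i)
        = π ⟨Module.AEval'.of T (e h), he h⟩ := rfl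
    rw [this, ← map_smul]
    show Φ ⟨(T ^ (j : ℕ)) (e h), hmemE h j⟩ = π ((X ^ (j : ℕ) : k[X]) • ⟨_, he h⟩)
    have harg : ((X ^ (j : ℕ) : k[X]) • (⟨Module.AEval'.of T (e h), he h⟩ : ↥(kerP T p i)))
        = ⟨Module.AEval'.of T ((T ^ (j : ℕ)) (e h)), hmem h j⟩ := by
      apply Subtype.ext
      show (X ^ (j : ℕ) : k[X]) • Module.AEval'.of T (e h) = _
      rw [smul_of, map_pow, aeval_X]
    rw [harg]
    rfl
  -- H ≤ Ker'
  have hHle : Submodule.span k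
      (Set.range fun hm : Fin ν × Fin d => (T ^ (hm.2 : ℕ)) (e hm.1)) ≤ Ker' := by
    rw [Submodule.span_le]
    rintro _ ⟨hm, rfl⟩
    exact hmemE hm.1 hm.2
  -- W' ≤ Ker'
  have hWle : W' ≤ Ker' := by
    rw [hW']
    apply sup_le
    · intro x hx
      rw [LinearMap.mem_ker] at hx ⊢
      have : i = (i - 1) + 1 := (Nat.succ_pred_eq_of_pos hi1).symm
      rw [this, pow_succ', Module.End.mul_apply, hx, map_zero]
    · rintro _ ⟨w, hw, rfl⟩
      simp only [SetLike.mem_coe, LinearMap.mem_ker] at hw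
      rw [hKer', LinearMap.mem_ker, ← Module.End.mul_apply, ← pow_succ, hw]
  constructor
  · -- disjointness
    rw [Submodule.disjoint_def]
    intro v hvW hvH
    have hvK : v ∈ Ker' := hHle hvH
    obtain ⟨c, hc⟩ := (Submodule.mem_span_range_iff_exists_fun k).mp hvH
    have hv0 : Φ ⟨v, hvK⟩ = 0 := (hΦzero _).mpr hvW
    have hexp : (⟨v, hvK⟩ : ↥Ker')
        = ∑ hm : Fin ν × Fin d, c hm • (⟨(T ^ (hm.2 : ℕ)) (e hm.1), hmemE hm.1 hm.2⟩ : ↥Ker') := by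
      apply Subtype.ext
      rw [AddSubmonoidClass.coe_finset_sum]
      simp only [SetLike.val_smul]
      exact hc.symm
    rw [hexp, map_sum] at hv0
    simp only [map_smul, hΦbasis] at hv0
    have hswap : ∑ hm : Fin ν × Fin d, c hm • cb (hm.2, hm.1)
        = ∑ ij : Fin d × Fin ν, c (ij.2, ij.1) • cb ij := by
      exact Fintype.sum_equiv (Equiv.prodComm (Fin ν) (Fin d)) _ _ (fun hm => rfl)
    rw [hswap] at hv0
    have hzero : ∀ ij : Fin d × Fin ν, c (ij.2, ij.1) = 0 :=
      Fintype.linearIndependent_iff.mp cb.linearIndependent _ hv0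
    have hcall : ∀ hm : Fin ν × Fin d, c hm = 0 := fun hm => hzero (hm.2, hm.1)
    rw [← hc]
    simp [hcall]
  · -- sum is everything
    apply le_antisymm
    · exact sup_le hWle hHle
    · intro v hv
      set y : ↥Ker' := ⟨v, hv⟩ with hy
      set r := cb.repr (Φ y) with hr
      set s : ↥Ker' := ∑ ij : Fin d × Fin ν,
        r ij • (⟨(T ^ (ij.1 : ℕ)) (e ij.2), hmemE ij.2 ij.1⟩ : ↥Ker') with hs
      have hΦs : Φ s = Φ y := by
        rw [hs, map_sum]
        simp only [map_smul, hΦbasis]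
        exact cb.sum_repr (Φ y)
      have hys : Φ (y - s) = 0 := by rw [map_sub, hΦs, sub_self]
      have hysW : ((y - s : ↥Ker') : E) ∈ W' := (hΦzero _).mp hys
      have hsH : (s : E) ∈ Submodule.span k
          (Set.range fun hm : Fin ν × Fin d => (T ^ (hm.2 : ℕ)) (e hm.1)) := by
        rw [hs, AddSubmonoidClass.coe_finset_sum]
        apply Submodule.sum_mem
        intro ij _
        rw [SetLike.val_smul]
        exact Submodule.smul_mem _ _ (Submodule.subset_span ⟨(ij.2, ij.1), rfl⟩)
      rw [Submodule.mem_sup]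
      exact ⟨(y - s : ↥Ker'), hysW, (s : E), hsH, by simp [hy]⟩
end

section
/- Let V be an arbitrary k-vector space and f an endomorphism of V whose annihilator polynomial is a_f(x) = p(x)^n with p(x) monic irreducible of degree d, and let K = k[x]/(p(x)). Fix 1 ≤ i ≤ n and set W_i = Ker p(f)^{i-1} + p(f)(Ker p(f)^{i+1}), with π_i : Ker p(f)^i → Ker p(f)^i / W_i the natural projection. If {v̄_h}_{h∈S} is a (possibly infinite) basis of Ker p(f)^i / W_i as a K-vector space and {v_h}_{h∈S} are vectors of Ker p(f)^i with π_i(v_h) = v̄_h for all h ∈ S, then the family ⋃_{h∈S} {v_h, f(v_h), f²(v_h), …, f^{d-1}(v_h)} is linearly independent over k in Ker p(f)^i. -/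
open Polynomial Module

universe u v w

/-- Let `V` be an arbitrary `k`-vector space and `f` an endomorphism of `V`
whose annihilator polynomial is `a_f(x) = p(x)^n` with `p(x)` monic irreducible of degree `d`,
and let `K = k[x]/(p(x))`.  Fix `1 ≤ i ≤ n` and set
`W_i = Ker p(f)^{i-1} + p(f)(Ker p(f)^{i+1})`, with `π_i` the natural projection onto
`Ker p(f)^i / W_i`.  If `{v̄_h}_{h ∈ S}` is a (possibly infinite) `K`-basis of
`Ker p(f)^i / W_i` and `{v_h}_{h ∈ S}` are vectors of `Ker p(f)^i` with `π_i(v_h) = v̄_h` for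
all `h ∈ S`, then the family `⋃_{h ∈ S} {v_h, f v_h, …, f^{d-1} v_h}` is linearly independent
over `k`. -/
theorem stmt_2 {k : Type u} [Field k] {V : Type v} [AddCommGroup V] [Module k V]
    (f : Module.End k V) (p : k[X]) (n d : ℕ)
    (hmonic : p.Monic) (hirr : Irreducible p) (hdeg : p.natDegree = d)
    (hmin : minpoly k f = p ^ n)
    (i : ℕ) (hi1 : 1 ≤ i) (hin : i ≤ n)
    (S : Type w) (v : S → V)
    (hv : ∀ h, Module.AEval'.of f (v h) ∈ kerP f p i)
    (b : Basis S (k[X] ⧸ Ideal.span {p}) (Qmod f p i))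
    (hb : ∀ h, b h = Submodule.Quotient.mk ⟨Module.AEval'.of f (v h), hv h⟩) :
    LinearIndependent k fun hm : S × Fin d => (f ^ (hm.2 : ℕ)) (v hm.1) := by
  classical
  rw [linearIndependent_iff']
  intro s g hg
  set g' : S × Fin d → k := fun hm => if hm ∈ s then g hm else 0 with hg'def
  set t : Finset S := s.image Prod.fst with ht
  set q : S → k[X] := fun h => ∑ m : Fin d, Polynomial.C (g' (h, m)) * X ^ (m : ℕ) with hqdef
  have hsub : s ⊆ t ×ˢ (Finset.univ : Finset (Fin d)) := fun x hx =>
    Finset.mem_product.mpr ⟨Finset.mem_image_of_mem _ hx, Finset.mem_univ _⟩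
  have hsum : ∑ h ∈ t, (Polynomial.aeval f (q h)) (v h) = 0 := by
    have h1 : ∑ h ∈ t, (Polynomial.aeval f (q h)) (v h)
        = ∑ hm ∈ t ×ˢ (Finset.univ : Finset (Fin d)),
            g' hm • (f ^ (hm.2 : ℕ)) (v hm.1) := by
      rw [Finset.sum_product]
      refine Finset.sum_congr rfl fun h _ => ?_
      simp only [hqdef, map_sum, map_mul, aeval_C, aeval_X_pow, LinearMap.coe_sum,
        Finset.sum_apply, Module.End.mul_apply, Module.algebraMap_end_apply]
    rw [h1, ← Finset.sum_subset hsub (fun x _ hx => by simp [hg'def, hx])]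
    rw [← hg]
    exact Finset.sum_congr rfl fun x hx => by simp [hg'def, hx]
  -- the corresponding element of `kerP f p i` is zero
  have hker : (∑ h ∈ t, q h • (⟨Module.AEval'.of f (v h), hv h⟩ : kerP f p i)) = 0 := by
    apply Subtype.ext
    push_cast
    have : ∀ h : S, q h • (Module.AEval'.of f (v h))
        = Module.AEval'.of f ((Polynomial.aeval f (q h)) (v h)) := fun h =>
      (Module.AEval.of_aeval_smul f (q h) (v h)).symm
    rw [Finset.sum_congr rfl fun h _ => this h, ← map_sum, hsum, map_zero]
  -- pass to the quotient
  have hquot : ∑ h ∈ t, (Ideal.Quotient.mk (Ideal.span {p}) (q h)) • b h = 0 := by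
    have : ∀ h : S, (Ideal.Quotient.mk (Ideal.span {p}) (q h)) • b h
        = Submodule.Quotient.mk (q h • (⟨Module.AEval'.of f (v h), hv h⟩ : kerP f p i)) := by
      intro h
      rw [hb h]
      rfl
    rw [Finset.sum_congr rfl fun h _ => this h]
    simp only [← Submodule.mkQ_apply, ← map_sum, hker, map_zero]
  -- use linear independence of the basis
  have hq0 : ∀ h ∈ t, q h = 0 := by
    intro h hh
    have hmk : Ideal.Quotient.mk (Ideal.span {p}) (q h) = 0 :=
      linearIndependent_iff'.mp b.linearIndependent t _ hquot h hh
    have hdvd : p ∣ q h := (Ideal.mem_span_singleton).mp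
      ((Ideal.Quotient.eq_zero_iff_mem).mp hmk)
    refine Polynomial.eq_zero_of_dvd_of_degree_lt hdvd ?_
    have hpdeg : p.degree = (d : WithBot ℕ) := by
      rw [Polynomial.degree_eq_natDegree hmonic.ne_zero, hdeg]
    rw [hpdeg]
    refine lt_of_le_of_lt (Polynomial.degree_sum_le _ _) ?_
    rw [Finset.sup_lt_iff (by exact_mod_cast WithBot.bot_lt_coe d)]
    intro m _
    refine lt_of_le_of_lt (Polynomial.degree_C_mul_X_pow_le _ _) ?_
    exact_mod_cast m.2
  -- conclude
  intro hm hhm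
  have hht : hm.1 ∈ t := Finset.mem_image_of_mem _ hhm
  have hcoeff : (q hm.1).coeff (hm.2 : ℕ) = g' hm := by
    rw [hqdef]
    simp only [Polynomial.finset_sum_coeff, Polynomial.coeff_C_mul, Polynomial.coeff_X_pow]
    rw [Finset.sum_eq_single hm.2]
    · simp
    · intro m _ hne
      have hne' : ¬ ((m : ℕ) = (hm.2 : ℕ)) := fun hc => hne (Fin.ext hc)
      have hne'' : ¬ ((hm.2 : ℕ) = (m : ℕ)) := fun hc => hne' hc.symm
      simp [hne', hne'']
    · simp
  have h0 : g' hm = 0 := by rw [← hcoeff, hq0 hm.1 hht]; simp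
  simpa [hg'def, hhm] using h0
end

section
/- Let V be an arbitrary k-vector space and f an endomorphism of V whose annihilator polynomial is a_f(x) = p(x)^n with p(x) monic irreducible of degree d, and let K = k[x]/(p(x)). Fix 1 ≤ i ≤ n and set W_i = Ker p(f)^{i-1} + p(f)(Ker p(f)^{i+1}). If {v_h}_{h∈S} ⊆ Ker p(f)^i are vectors whose images in Ker p(f)^i / W_i form a K-basis, and H_i is the k-subspace of Ker p(f)^i generated by the family ⋃_{h∈S} {v_h, f(v_h), f²(v_h), …, f^{d-1}(v_h)}, then H_i is a complementary subspace of W_i in Ker p(f)^i, i.e. Ker p(f)^i = W_i ⊕ H_i. -/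
open Polynomial Module

universe u v w

section Aux
variable {k : Type u} [Field k] {V : Type v} [AddCommGroup V] [Module k V]

theorem aux_mem_kerP (f : Module.End k V) (p : k[X]) (j : ℕ) (w : V) :
    Module.AEval'.of f w ∈ kerP f p j ↔ w ∈ LinearMap.ker (aeval f p ^ j) := by
  rw [kerP, Submodule.mem_torsionBy_iff, LinearMap.mem_ker, ← Module.AEval.of_aeval_smul, map_pow]
  exact (Module.AEval'.of f).map_eq_zero_iff.trans Iff.rfl

theorem aux_mem_wSub (f : Module.End k V) (p : k[X]) (i : ℕ) (w : V) :
    Module.AEval'.of f w ∈ wSub f p i ↔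
      w ∈ (LinearMap.ker (aeval f p ^ (i - 1)) ⊔
        (LinearMap.ker (aeval f p ^ (i + 1))).map (aeval f p)) := by
  rw [wSub, Submodule.mem_sup, Submodule.mem_sup]
  constructor
  · rintro ⟨y, hy, z, hz, hyz⟩
    obtain ⟨z', hz', rfl⟩ := Submodule.mem_map.mp hz
    refine ⟨(Module.AEval'.of f).symm y, (aux_mem_kerP f p _ _).mp (by simpa using hy),
      aeval f p ((Module.AEval'.of f).symm z'),
      Submodule.mem_map.mpr ⟨_, (aux_mem_kerP f p _ _).mp (by simpa using hz'), rfl⟩, ?_⟩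
    apply (Module.AEval'.of f).injective
    rw [← hyz]; rfl
  · rintro ⟨y, hy, z, hz, hyz⟩
    obtain ⟨z', hz', rfl⟩ := Submodule.mem_map.mp hz
    refine ⟨Module.AEval'.of f y, (aux_mem_kerP f p _ _).mpr hy, p • Module.AEval'.of f z',
      Submodule.mem_map.mpr ⟨_, (aux_mem_kerP f p _ _).mpr hz', rfl⟩, ?_⟩
    rw [← hyz]; rfl

end Aux

/-- Let `V` be an arbitrary `k`-vector space and `f` an endomorphism of `V`
whose annihilator polynomial is `a_f(x) = p(x)^n` with `p(x)` monic irreducible of degree `d`,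
and let `K = k[x]/(p(x))`.  Fix `1 ≤ i ≤ n` and set
`W_i = Ker p(f)^{i-1} + p(f)(Ker p(f)^{i+1})`.  If `{v_h}_{h ∈ S} ⊆ Ker p(f)^i` are vectors
whose images in `Ker p(f)^i / W_i` form a `K`-basis, and `H_i` is the `k`-subspace generated
by the family `⋃_{h ∈ S} {v_h, f v_h, …, f^{d-1} v_h}`, then `H_i` is a complementary subspace
of `W_i` in `Ker p(f)^i`, i.e. `Ker p(f)^i = W_i ⊕ H_i`. -/

theorem stmt_3 {k : Type u} [Field k] {V : Type v} [AddCommGroup V] [Module k V]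
    (f : Module.End k V) (p : k[X]) (n d : ℕ)
    (hmonic : p.Monic) (hirr : Irreducible p) (hdeg : p.natDegree = d)
    (hmin : minpoly k f = p ^ n)
    (i : ℕ) (hi1 : 1 ≤ i) (hin : i ≤ n)
    (S : Type w) (v : S → V)
    (hv : ∀ h, Module.AEval'.of f (v h) ∈ kerP f p i)
    (b : Basis S (k[X] ⧸ Ideal.span {p}) (Qmod f p i))
    (hb : ∀ h, b h = Submodule.Quotient.mk ⟨Module.AEval'.of f (v h), hv h⟩)
    (H : Submodule k V)
    (hH : H = Submodule.span k
      (Set.range fun hm : S × Fin d => (f ^ (hm.2 : ℕ)) (v hm.1))) :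
    Disjoint (LinearMap.ker (aeval f p ^ (i - 1)) ⊔
        (LinearMap.ker (aeval f p ^ (i + 1))).map (aeval f p)) H ∧
      (LinearMap.ker (aeval f p ^ (i - 1)) ⊔
          (LinearMap.ker (aeval f p ^ (i + 1))).map (aeval f p)) ⊔ H
        = LinearMap.ker (aeval f p ^ i) := by
  classical
  subst hdeg
  have hp1 : p ≠ 1 := fun h => hirr.not_isUnit (h ▸ isUnit_one)
  have hd0 : 0 < p.natDegree := hirr.natDegree_pos
  -- W ≤ ker ap^i
  have hWle : LinearMap.ker (aeval f p ^ (i - 1)) ⊔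
      (LinearMap.ker (aeval f p ^ (i + 1))).map (aeval f p)
      ≤ LinearMap.ker (aeval f p ^ i) := by
    apply sup_le
    · intro x hx
      rw [LinearMap.mem_ker] at hx ⊢
      rw [show i = (i - 1) + 1 from (Nat.succ_pred_eq_of_pos hi1).symm, pow_succ',
        Module.End.mul_apply, hx, map_zero]
    · rw [Submodule.map_le_iff_le_comap]
      intro y hy
      rw [LinearMap.mem_ker] at hy
      rw [Submodule.mem_comap, LinearMap.mem_ker, ← Module.End.mul_apply, ← pow_succ]
      exact hy
  -- each v h is in the kernel
  have hvker : ∀ h, v h ∈ LinearMap.ker (aeval f p ^ i) :=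
    fun h => (aux_mem_kerP f p i (v h)).mp (hv h)
  -- f^j (v h) in kernel
  have hgen : ∀ (h : S) (j : ℕ), (f ^ j) (v h) ∈ LinearMap.ker (aeval f p ^ i) := by
    intro h j
    have hcomm : aeval f p ^ i * f ^ j = f ^ j * aeval f p ^ i := by
      have := (Commute.all (p ^ i) ((X : k[X]) ^ j)).map (aeval f)
      simpa [map_pow] using this.eq
    rw [LinearMap.mem_ker, ← Module.End.mul_apply, hcomm, Module.End.mul_apply,
      LinearMap.mem_ker.mp (hvker h), map_zero]
  -- H ≤ ker ap^i
  have hHle : H ≤ LinearMap.ker (aeval f p ^ i) := by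
    rw [hH, Submodule.span_le]
    rintro _ ⟨⟨h, j⟩, rfl⟩
    exact hgen h j
  -- elements of kerP
  have hmemq : ∀ (q : k[X]) (h : S), Module.AEval'.of f (aeval f q (v h)) ∈ kerP f p i := by
    intro q h
    exact Submodule.smul_mem _ q (hv h)
  set Wq := (wSub f p i).comap (kerP f p i).subtype with hWq
  -- the projection of aeval f q (v h)
  have hpi : ∀ (q : k[X]) (h : S),
      Wq.mkQ ⟨Module.AEval'.of f (aeval f q (v h)), hmemq q h⟩
        = Ideal.Quotient.mk (Ideal.span {p}) q • b h := by
    intro q h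
    have h1 : (⟨Module.AEval'.of f (aeval f q (v h)), hmemq q h⟩ : kerP f p i)
        = q • ⟨Module.AEval'.of f (v h), hv h⟩ := rfl
    rw [h1, map_smul, hb]
    rfl
  -- summing: mkQ of a sum of aeval f (q h) (v h)
  have hsum : ∀ (T : Finset S) (q : S → k[X]),
      ∃ hm : Module.AEval'.of f (∑ h ∈ T, aeval f (q h) (v h)) ∈ kerP f p i,
        Wq.mkQ ⟨_, hm⟩ = ∑ h ∈ T, Ideal.Quotient.mk (Ideal.span {p}) (q h) • b h := by
    intro T q
    have he : (⟨Module.AEval'.of f (∑ h ∈ T, aeval f (q h) (v h)),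
        by rw [map_sum]; exact Submodule.sum_mem _ fun h _ => hmemq (q h) h⟩ : kerP f p i)
        = ∑ h ∈ T, ⟨Module.AEval'.of f (aeval f (q h) (v h)), hmemq (q h) h⟩ := by
      apply Subtype.ext
      push_cast
      rw [map_sum]
    refine ⟨by rw [map_sum]; exact Submodule.sum_mem _ fun h _ => hmemq (q h) h, ?_⟩
    rw [he, map_sum]
    exact Finset.sum_congr rfl fun h _ => hpi (q h) h
  constructor
  · -- disjointness
    rw [Submodule.disjoint_def]
    intro w hwW hwH
    rw [hH] at hwH
    obtain ⟨c, hc⟩ := Finsupp.mem_span_range_iff_exists_finsupp.mp hwH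
    set T : Finset S := c.support.image Prod.fst with hT
    set q : S → k[X] := fun h => ∑ j : Fin p.natDegree, C (c (h, j)) * X ^ (j : ℕ) with hq
    -- w as a sum
    have hterm : ∀ h : S, aeval f (q h) (v h)
        = ∑ j : Fin p.natDegree, c (h, j) • (f ^ (j : ℕ)) (v h) := by
      intro h
      rw [hq]
      simp only [map_sum, map_mul, aeval_C, map_pow, aeval_X, LinearMap.sum_apply,
        Module.End.mul_apply, Module.algebraMap_end_apply]
    have hw_eq : w = ∑ h ∈ T, aeval f (q h) (v h) := by
      rw [← hc]
      simp_rw [hterm]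
      rw [← Finset.sum_product']
      rw [Finsupp.sum]
      refine Finset.sum_subset ?_ ?_
      · intro x hx
        rw [Finset.mem_product]
        exact ⟨Finset.mem_image.mpr ⟨x, hx, rfl⟩, Finset.mem_univ _⟩
      · intro x _ hx
        rw [Finsupp.notMem_support_iff.mp hx, zero_smul]
    -- the projection is zero
    obtain ⟨hm, hmk⟩ := hsum T q
    have hz : (∑ h ∈ T, Ideal.Quotient.mk (Ideal.span {p}) (q h) • b h : Qmod f p i) = 0 := by
      rw [← hmk, Submodule.mkQ_apply, Submodule.Quotient.mk_eq_zero, hWq,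
        Submodule.mem_comap, Submodule.subtype_apply]
      exact (aux_mem_wSub f p i _).mpr (hw_eq ▸ hwW)
    -- linear independence kills the coefficients
    have hcoef : ∀ h ∈ T, Ideal.Quotient.mk (Ideal.span {p}) (q h) = 0 :=
      linearIndependent_iff'.mp b.linearIndependent T _ hz
    have hq0 : ∀ h ∈ T, q h = 0 := by
      intro h hh
      have hdvd : p ∣ q h := by
        rw [← Ideal.mem_span_singleton]
        exact (Ideal.Quotient.eq_zero_iff_mem).mp (hcoef h hh)
      refine eq_zero_of_dvd_of_degree_lt hdvd ?_
      have hdl : q h ∈ degreeLT k p.natDegree := by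
        rw [hq]
        apply Submodule.sum_mem
        intro j _
        rw [Polynomial.mem_degreeLT, C_mul_X_pow_eq_monomial]
        exact lt_of_le_of_lt (degree_monomial_le _ _) (by exact_mod_cast j.2)
      rw [degree_eq_natDegree hmonic.ne_zero]
      exact Polynomial.mem_degreeLT.mp hdl
    -- hence all c vanish on the support
    have hc0 : ∀ x ∈ c.support, c x = 0 := by
      rintro ⟨h, j⟩ hx
      have hhT : h ∈ T := Finset.mem_image.mpr ⟨(h, j), hx, rfl⟩
      have hcoeff : (q h).coeff (j : ℕ) = c (h, j) := by
        rw [hq]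
        rw [finset_sum_coeff]
        simp only [coeff_C_mul, coeff_X_pow]
        rw [Finset.sum_eq_single j]
        · simp
        · intro j' _ hj'
          rw [if_neg (fun hh : (j : ℕ) = (j' : ℕ) => hj' (Fin.ext hh.symm))]
          ring
        · simp
      rw [← hcoeff, hq0 h hhT, coeff_zero]
    rw [← hc, Finsupp.sum]
    exact Finset.sum_eq_zero fun x hx => by rw [hc0 x hx, zero_smul]
  · -- the sup equals the kernel
    apply le_antisymm (sup_le hWle hHle)
    intro w hw
    have hw' : Module.AEval'.of f w ∈ kerP f p i := (aux_mem_kerP f p i w).mpr hw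
    set x : Qmod f p i := Wq.mkQ ⟨Module.AEval'.of f w, hw'⟩ with hx
    set cK := b.repr x with hcK
    have hlift : ∀ h, ∃ r : k[X], r.natDegree < p.natDegree ∧
        Ideal.Quotient.mk (Ideal.span {p}) r = cK h := by
      intro h
      obtain ⟨r0, hr0⟩ := Ideal.Quotient.mk_surjective (cK h)
      refine ⟨r0 %ₘ p, natDegree_modByMonic_lt _ hmonic hp1, ?_⟩
      rw [← hr0]
      apply Ideal.Quotient.eq.mpr
      rw [modByMonic_eq_sub_mul_div _ p, sub_sub_cancel_left, neg_mem_iff]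
      exact Ideal.mem_span_singleton.mpr (dvd_mul_right _ _)
    choose q hqdeg hqmk using hlift
    set u : V := ∑ h ∈ cK.support, aeval f (q h) (v h) with hu
    have huH : u ∈ H := by
      rw [hu, hH]
      apply Submodule.sum_mem
      intro h _
      rw [aeval_eq_sum_range' (hqdeg h) f, LinearMap.sum_apply]
      apply Submodule.sum_mem
      intro j hj
      rw [LinearMap.smul_apply]
      exact Submodule.smul_mem _ _
        (Submodule.subset_span ⟨(h, ⟨j, Finset.mem_range.mp hj⟩), rfl⟩)
    obtain ⟨hm, hmk⟩ := hsum cK.support q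
    have hux : Wq.mkQ ⟨Module.AEval'.of f u, hm⟩ = x := by
      rw [hmk]
      simp_rw [hqmk]
      have h3 := b.linearCombination_repr x
      rw [Finsupp.linearCombination_apply, Finsupp.sum] at h3
      rw [← hcK] at h3
      exact h3
    -- w - u ∈ W
    have hwu : w - u ∈ LinearMap.ker (aeval f p ^ (i - 1)) ⊔
        (LinearMap.ker (aeval f p ^ (i + 1))).map (aeval f p) := by
      have h4 : Wq.mkQ (⟨Module.AEval'.of f w, hw'⟩ - ⟨Module.AEval'.of f u, hm⟩) = 0 := by
        rw [map_sub, hux, hx, sub_self]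
      rw [Submodule.mkQ_apply, Submodule.Quotient.mk_eq_zero, hWq,
        Submodule.mem_comap, Submodule.subtype_apply] at h4
      have h5 : Module.AEval'.of f (w - u) ∈ wSub f p i := by
        rw [map_sub]; exact h4
      exact (aux_mem_wSub f p i _).mp h5
    have h6 := Submodule.add_mem _ (Submodule.mem_sup_left hwu) (Submodule.mem_sup_right huH)
    rwa [sub_add_cancel] at h6
end

section
/- Let V be an arbitrary k-vector space and f an endomorphism of V whose annihilator polynomial is a_f(x) = p(x)^n with p(x) monic irreducible. Suppose that for each j with i+1 ≤ j ≤ n, H_j is a k-subspace of Ker p(f)^j satisfying Ker p(f)^j = (Ker p(f)^{j-1} + p(f)(Ker p(f)^{j+1})) ⊕ H_j, the H_j being chosen recursively as in the construction of Jordan bases. Then for every 1 ≤ i ≤ n the sum Ker p(f)^{i-1} + p(f)^{n-i}(H_n) + p(f)^{n-i-1}(H_{n-1}) + ⋯ + p(f)(H_{i+1}) is direct and equals Ker p(f)^{i-1} + p(f)(Ker p(f)^{i+1}). -/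
open Polynomial

/-- Let `V` be an arbitrary `k`-vector space and `f` an endomorphism of `V`
whose annihilator polynomial is `a_f(x) = p(x)^n` with `p(x)` monic irreducible.  Suppose that
for each `j` with `i+1 ≤ j ≤ n`, `H j` is a `k`-subspace of `Ker p(f)^j` satisfying
`Ker p(f)^j = (Ker p(f)^{j-1} + p(f)(Ker p(f)^{j+1})) ⊕ H j`.  Then for every `1 ≤ i ≤ n` the
sum `Ker p(f)^{i-1} + p(f)^{n-i}(H n) + ⋯ + p(f)(H (i+1))` is direct and equals
`Ker p(f)^{i-1} + p(f)(Ker p(f)^{i+1})`.  (The family `F` below lists the summands: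
`F 0 = Ker p(f)^{i-1}` and `F m = p(f)^m (H (i+m))` for `1 ≤ m ≤ n - i`, the remaining
members being zero.) -/
theorem stmt_8 {k : Type*} [Field k] {V : Type*} [AddCommGroup V] [Module k V]
    (f : Module.End k V) (p : k[X]) (n : ℕ)
    (hmonic : p.Monic) (hirr : Irreducible p)
    (hmin : minpoly k f = p ^ n)
    (i : ℕ) (hi1 : 1 ≤ i) (hin : i ≤ n)
    (H : ℕ → Submodule k V)
    (hcompl : ∀ j, i + 1 ≤ j → j ≤ n →
      Disjoint (LinearMap.ker (aeval f p ^ (j - 1)) ⊔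
          (LinearMap.ker (aeval f p ^ (j + 1))).map (aeval f p)) (H j) ∧
        (LinearMap.ker (aeval f p ^ (j - 1)) ⊔
            (LinearMap.ker (aeval f p ^ (j + 1))).map (aeval f p)) ⊔ H j
          = LinearMap.ker (aeval f p ^ j))
    (F : ℕ → Submodule k V)
    (hF0 : F 0 = LinearMap.ker (aeval f p ^ (i - 1)))
    (hFm : ∀ m, 1 ≤ m → m ≤ n - i → F m = (H (i + m)).map (aeval f p ^ m))
    (hFtop : ∀ m, n - i < m → F m = ⊥) :
    iSupIndep F ∧
      (⨆ m, F m) = LinearMap.ker (aeval f p ^ (i - 1)) ⊔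
        (LinearMap.ker (aeval f p ^ (i + 1))).map (aeval f p) := by
  classical
  set P : Module.End k V := aeval f p with hP
  -- basic facts
  have hPn : P ^ n = 0 := by
    have h1 := minpoly.aeval k f
    rw [hmin, map_pow] at h1
    exact h1
  have hPzero : ∀ s, n ≤ s → P ^ s = 0 := by
    intro s hs
    have : s = (s - n) + n := by omega
    rw [this, pow_add, hPn, mul_zero]
  have hkertop : ∀ s, n ≤ s → LinearMap.ker (P ^ s) = ⊤ := by
    intro s hs
    rw [hPzero s hs]
    exact LinearMap.ker_zero
  have hmapker : ∀ a b c : ℕ, a + b = c →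
      Submodule.map (P ^ a) (LinearMap.ker (P ^ c)) ≤ LinearMap.ker (P ^ b) := by
    intro a b c hab
    rintro _ ⟨x, hx, rfl⟩
    show (P ^ b) ((P ^ a) x) = 0
    rw [← Module.End.mul_apply, ← pow_add]
    have : b + a = c := by omega
    rw [this]
    exact hx
  have hkermono : ∀ a b : ℕ, a ≤ b → LinearMap.ker (P ^ a) ≤ LinearMap.ker (P ^ b) := by
    intro a b hab x hx
    show (P ^ b) x = 0
    have : b = (b - a) + a := by omega
    rw [this, pow_add, Module.End.mul_apply, show (P ^ a) x = 0 from hx, map_zero]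
  have hmapmap : ∀ (a b : ℕ) (S : Submodule k V),
      Submodule.map (P ^ a) (Submodule.map (P ^ b) S) = Submodule.map (P ^ (a + b)) S := by
    intro a b S
    rw [pow_add, Module.End.mul_eq_comp, Submodule.map_comp]
  have hmapmapP : ∀ (a : ℕ) (S : Submodule k V),
      Submodule.map (P ^ a) (Submodule.map P S) = Submodule.map (P ^ (a + 1)) S := by
    intro a S
    rw [pow_succ, Module.End.mul_eq_comp, Submodule.map_comp]
  have hPmapmap : ∀ (a : ℕ) (S : Submodule k V),
      Submodule.map P (Submodule.map (P ^ a) S) = Submodule.map (P ^ (a + 1)) S := by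
    intro a S
    rw [pow_succ', Module.End.mul_eq_comp, Submodule.map_comp]
  have hHle : ∀ j, i + 1 ≤ j → j ≤ n → H j ≤ LinearMap.ker (P ^ j) := by
    intro j hj1 hj2
    have h2 := (hcompl j hj1 hj2).2
    rw [← h2]
    exact le_sup_right
  -- core lemma: any finitely supported decomposition of 0 has all components 0
  have hcore : ∀ c : ℕ → V, (∀ m, c m ∈ F m) →
      (∑ m ∈ Finset.range (n - i + 1), c m = 0) → ∀ m, c m = 0 := by
    intro c hc hsum
    have hex : ∀ m : ℕ, ∃ z, 1 ≤ m → m ≤ n - i → z ∈ H (i + m) ∧ (P ^ m) z = c m := by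
      intro m
      by_cases hm : 1 ≤ m ∧ m ≤ n - i
      · have := hc m
        rw [hFm m hm.1 hm.2] at this
        obtain ⟨z, hz, hze⟩ := this
        exact ⟨z, fun _ _ => ⟨hz, hze⟩⟩
      · exact ⟨0, fun h1 h2 => absurd ⟨h1, h2⟩ hm⟩
    choose h hh using hex
    have e1 : (Finset.range (n - i + 1)).erase 0 = Finset.Icc 1 (n - i) := by
      ext s
      simp only [Finset.mem_erase, Finset.mem_range, Finset.mem_Icc]
      omega
    have e2 : c 0 + ∑ m ∈ Finset.Icc 1 (n - i), c m = 0 := by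
      rw [← e1, Finset.add_sum_erase _ c (by simp)]
      exact hsum
    have hstep : ∀ t, 1 ≤ t → t ≤ n - i → (∀ s, 1 ≤ s → s < t → c s = 0) → c t = 0 := by
      intro t ht1 htM hprev
      have e3 : ∑ m ∈ Finset.Icc t (n - i), c m = - c 0 := by
        have hsub : Finset.Icc t (n - i) ⊆ Finset.Icc 1 (n - i) := by
          intro s hs
          simp only [Finset.mem_Icc] at hs ⊢
          omega
        have heq : ∑ m ∈ Finset.Icc t (n - i), c m = ∑ m ∈ Finset.Icc 1 (n - i), c m :=
          Finset.sum_subset hsub (by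
            intro s hs hns
            simp only [Finset.mem_Icc] at hs hns
            exact hprev s hs.1 (by omega))
        rw [heq]
        exact eq_neg_of_add_eq_zero_right e2
      set y : V := ∑ m ∈ Finset.Icc t (n - i), (P ^ (m - t)) (h m) with hy
      have hy1 : (P ^ t) y = - c 0 := by
        rw [hy, map_sum, ← e3]
        apply Finset.sum_congr rfl
        intro m hm
        simp only [Finset.mem_Icc] at hm
        rw [← Module.End.mul_apply, ← pow_add, show t + (m - t) = m from by omega]
        exact (hh m (by omega) hm.2).2
      have hc0 : (P ^ (i - 1)) (c 0) = 0 := by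
        have := hc 0
        rw [hF0] at this
        exact this
      have hy2 : y ∈ LinearMap.ker (P ^ (i + t - 1)) := by
        show (P ^ (i + t - 1)) y = 0
        rw [show i + t - 1 = (i - 1) + t from by omega, pow_add, Module.End.mul_apply, hy1,
          map_neg, hc0, neg_zero]
      have e4 : (Finset.Icc t (n - i)).erase t = Finset.Icc (t + 1) (n - i) := by
        ext s
        simp only [Finset.mem_erase, Finset.mem_Icc]
        omega
      have hyt : y = h t + ∑ m ∈ Finset.Icc (t + 1) (n - i), (P ^ (m - t)) (h m) := by
        have haux := Finset.add_sum_erase (Finset.Icc t (n - i))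
          (fun m => (P ^ (m - t)) (h m)) (a := t) (by simp only [Finset.mem_Icc]; omega)
        rw [e4] at haux
        simp only [Nat.sub_self, pow_zero, Module.End.one_apply] at haux
        rw [hy]
        exact haux.symm
      have hw : ∑ m ∈ Finset.Icc (t + 1) (n - i), (P ^ (m - t)) (h m) ∈
          Submodule.map P (LinearMap.ker (P ^ (i + t + 1))) := by
        apply Submodule.sum_mem
        intro m hm
        simp only [Finset.mem_Icc] at hm
        refine ⟨(P ^ (m - t - 1)) (h m), ?_, ?_⟩
        · show (P ^ (i + t + 1)) ((P ^ (m - t - 1)) (h m)) = 0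
          rw [← Module.End.mul_apply, ← pow_add, show i + t + 1 + (m - t - 1) = i + m from by omega]
          exact hHle (i + m) (by omega) (by omega) (hh m (by omega) (by omega)).1
        · show P ((P ^ (m - t - 1)) (h m)) = (P ^ (m - t)) (h m)
          rw [← Module.End.mul_apply, ← pow_succ', show (m - t - 1) + 1 = m - t from by omega]
      have hmem : h t ∈ LinearMap.ker (P ^ (i + t - 1)) ⊔
          Submodule.map P (LinearMap.ker (P ^ (i + t + 1))) := by
        have hht : h t = y - ∑ m ∈ Finset.Icc (t + 1) (n - i), (P ^ (m - t)) (h m) := by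
          rw [hyt]; abel
        rw [hht]
        exact Submodule.sub_mem _ (Submodule.mem_sup_left hy2) (Submodule.mem_sup_right hw)
      have hd := (hcompl (i + t) (by omega) (by omega)).1
      have ht0 : h t = 0 :=
        Submodule.disjoint_def.mp hd (h t) hmem (hh t ht1 htM).1
      rw [← (hh t ht1 htM).2, ht0, map_zero]
    have hzero1 : ∀ t, 1 ≤ t → c t = 0 := by
      intro t
      induction t using Nat.strong_induction_on with
      | _ t ih =>
        intro ht1
        by_cases htM : t ≤ n - i
        · exact hstep t ht1 htM (fun s hs1 hst => ih s hst hs1)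
        · have := hc t
          rw [hFtop t (by omega)] at this
          simpa using this
    have hzero0 : c 0 = 0 := by
      have : ∑ m ∈ Finset.Icc 1 (n - i), c m = 0 :=
        Finset.sum_eq_zero (fun s hs => hzero1 s (by simp only [Finset.mem_Icc] at hs; omega))
      rw [this, add_zero] at e2
      exact e2
    intro m
    match m with
    | 0 => exact hzero0
    | (t + 1) => exact hzero1 (t + 1) (by omega)
  -- equality part
  have hkey : ∀ d j, i + 1 ≤ j → j + d = n + 1 →
      Submodule.map (P ^ (j - i)) (LinearMap.ker (P ^ j)) ≤ ⨆ m, F m := by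
    intro d
    induction d with
    | zero =>
      intro j hj1 hj2
      have hj : j = n + 1 := by omega
      subst hj
      refine le_trans ?_ (le_iSup F 0)
      rw [hF0, hkertop (n + 1) (by omega), ← hkertop n le_rfl]
      exact hmapker (n + 1 - i) (i - 1) n (by omega)
    | succ d ih =>
      intro j hj1 hj2
      have hjn : j ≤ n := by omega
      have h2 := (hcompl j hj1 hjn).2
      rw [← h2, Submodule.map_sup, Submodule.map_sup]
      refine sup_le (sup_le ?_ ?_) ?_
      · -- map P^{j-i} (ker P^{j-1}) ≤ F 0
        refine le_trans ?_ (le_iSup F 0)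
        rw [hF0]
        exact hmapker (j - i) (i - 1) (j - 1) (by omega)
      · -- map P^{j-i} (map P (ker P^{j+1})) ≤ ⨆ F
        rw [hmapmapP (j - i) _, show j - i + 1 = j + 1 - i from by omega]
        exact ih (j + 1) (by omega) (by omega)
      · -- map P^{j-i} (H j) = F (j - i)
        have hFe : F (j - i) = Submodule.map (P ^ (j - i)) (H j) := by
          rw [hFm (j - i) (by omega) (by omega), show i + (j - i) = j from by omega]
        rw [← hFe]
        exact le_iSup F (j - i)
  constructor
  · -- independence
    rw [iSupIndep_def]
    intro m0
    rw [Submodule.disjoint_def]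
    intro x hx hx'
    have hrw : (⨆ j, ⨆ (_ : j ≠ m0), F j) = ⨆ j, (if j = m0 then ⊥ else F j) := by
      apply iSup_congr
      intro j
      by_cases hj : j = m0 <;> simp [hj]
    rw [hrw, Submodule.mem_iSup_iff_exists_finsupp] at hx'
    obtain ⟨g, hg1, hg2⟩ := hx'
    by_cases hm0 : m0 ≤ n - i
    · set c : ℕ → V := fun j => if j = m0 then -x else g j with hc
      have hcF : ∀ j, c j ∈ F j := by
        intro j
        by_cases hj : j = m0
        · subst hj; simp only [hc, if_pos rfl]; exact neg_mem hx
        · have := hg1 j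
          rw [if_neg hj] at this
          simpa [hc, if_neg hj] using this
      have hgm0 : g m0 = 0 := by
        have := hg1 m0
        rw [if_pos rfl] at this
        simpa using this
      have hgsum : ∑ j ∈ Finset.range (n - i + 1), g j = x := by
        rw [← hg2]
        refine (Finsupp.sum_of_support_subset g ?_ (fun _ v => v) (fun _ _ => rfl)).symm
        intro j hj
        simp only [Finsupp.mem_support_iff] at hj
        simp only [Finset.mem_range]
        by_contra hcon
        apply hj
        have := hg1 j
        by_cases hje : j = m0
        · rw [if_pos hje] at this; simpa using this
        · rw [if_neg hje, hFtop j (by omega)] at this; simpa using this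
      have hm0mem : m0 ∈ Finset.range (n - i + 1) := by simp; omega
      have hcsum : ∑ j ∈ Finset.range (n - i + 1), c j = 0 := by
        rw [← Finset.add_sum_erase _ c hm0mem]
        have h1 : c m0 = -x := by simp [hc]
        have h2 : ∑ j ∈ (Finset.range (n - i + 1)).erase m0, c j
            = ∑ j ∈ (Finset.range (n - i + 1)).erase m0, g j := by
          apply Finset.sum_congr rfl
          intro j hj
          simp only [Finset.mem_erase] at hj
          simp [hc, if_neg hj.1]
        rw [h1, h2, Finset.sum_erase _ hgm0, hgsum]
        abel
      have h0 := hcore c hcF hcsum m0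
      rw [show c m0 = -x from if_pos rfl] at h0
      exact neg_eq_zero.mp h0
    · -- m0 > n - i : F m0 = ⊥
      have := hFtop m0 (by omega)
      rw [this] at hx
      simpa using hx
  · -- equality of the supremum
    apply le_antisymm
    · apply iSup_le
      intro m
      match m with
      | 0 => rw [hF0]; exact le_sup_left
      | (t + 1) =>
        by_cases hm : t + 1 ≤ n - i
        · rw [hFm (t + 1) (by omega) hm, ← hPmapmap t (H (i + (t + 1)))]
          refine le_trans ?_ le_sup_right
          apply Submodule.map_mono
          refine le_trans (Submodule.map_mono (hHle (i + (t + 1)) (by omega) (by omega))) ?_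
          exact hmapker t (i + 1) (i + (t + 1)) (by omega)
        · rw [hFtop (t + 1) (by omega)]
          exact bot_le
    · apply sup_le
      · rw [← hF0]
        exact le_iSup F 0
      · have := hkey (n - i) (i + 1) (by omega) (by omega)
        rw [show i + 1 - i = 1 from by omega, pow_one] at this
        exact this
end

section
/- (Well-definedness of the invariants) Let V be an arbitrary k-vector space and f an endomorphism of V whose annihilator polynomial is a_f(x) = p(x)^n with p(x) monic irreducible. If V, regarded as a k[x]-module via q(x)·v = q(f)(v), is isomorphic to ⊕_{i=1}^{n} (k[x]/(p(x)^i))^{(S_i)} for some index sets S_1, …, S_n, then for each 1 ≤ i ≤ n the cardinality of S_i equals ν_i(V, p(f)); in particular the multiplicities in any such decomposition are independent of the decomposition chosen. -/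
open Polynomial Module

universe u v w

open DirectSum

set_option maxHeartbeats 1000000
set_option synthInstance.maxHeartbeats 1000000
attribute [local instance] Classical.propDecidable
variable {k : Type u} [Field k]

noncomputable def redMap (p : k[X]) (j : ℕ) :
    (k[X] ⧸ Ideal.span {p ^ (j + 1)}) →ₗ[k[X]] (k[X] ⧸ Ideal.span {p}) :=
  Submodule.mapQ _ _ LinearMap.id (by
    simp only [Submodule.comap_id]
    exact Ideal.span_le.mpr (Set.singleton_subset_iff.mpr
      (Ideal.mem_span_singleton.mpr (dvd_pow_self p (Nat.succ_ne_zero j)))))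

@[simp] theorem redMap_mk (p : k[X]) (j : ℕ) (r : k[X]) :
    redMap p j (Ideal.Quotient.mk _ r) = Ideal.Quotient.mk _ r := by
  rw [redMap, ← Ideal.Quotient.mk_eq_mk, Submodule.mapQ_apply]; rfl

theorem qsmul (I : Ideal k[X]) (s r : k[X]) :
    s • (Ideal.Quotient.mk I r) = Ideal.Quotient.mk I (s * r) := by
  rw [← Ideal.Quotient.mk_eq_mk, ← Ideal.Quotient.mk_eq_mk, ← Submodule.Quotient.mk_smul,
    smul_eq_mul]

theorem cyc_tor (p : k[X]) {j l : ℕ} (h : j + 1 ≤ l) (c : k[X] ⧸ Ideal.span {p ^ (j + 1)}) :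
    p ^ l • c = 0 := by
  obtain ⟨r, rfl⟩ := Ideal.Quotient.mk_surjective c
  rw [qsmul, Ideal.Quotient.eq_zero_iff_mem]
  exact Ideal.mem_span_singleton.mpr (Dvd.dvd.mul_right (pow_dvd_pow p h) r)

theorem redMap_eq_zero (p : k[X]) (hp : Prime p) (j : ℕ) (c : k[X] ⧸ Ideal.span {p ^ (j + 1)})
    (h : p ^ j • c = 0) : redMap p j c = 0 := by
  obtain ⟨r, rfl⟩ := Ideal.Quotient.mk_surjective c
  rw [qsmul, Ideal.Quotient.eq_zero_iff_mem] at h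
  obtain ⟨t, ht⟩ := Ideal.mem_span_singleton.mp h
  rw [pow_succ, mul_assoc] at ht
  have hr : r = p * t := mul_left_cancel₀ (pow_ne_zero j hp.ne_zero) ht
  rw [redMap_mk, hr, Ideal.Quotient.eq_zero_iff_mem]
  exact Ideal.mem_span_singleton.mpr (Dvd.intro t rfl)

noncomputable def gMap (p : k[X]) {n : ℕ} (S : ℕ → Type v) (i : Fin n)
    (x : Σ _j : Fin n, S ((_j : ℕ) + 1)) :
    (k[X] ⧸ Ideal.span {p ^ ((x.1 : ℕ) + 1)}) →ₗ[k[X]]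
      (S ((i : ℕ) + 1) →₀ (k[X] ⧸ Ideal.span {p})) :=
  if h : x.1 = i then (Finsupp.lsingle (h ▸ x.2)).comp (redMap p (x.1 : ℕ)) else 0

noncomputable def phiMap (p : k[X]) {n : ℕ} (S : ℕ → Type v) (i : Fin n) :
    (⨁ x : Σ _j : Fin n, S ((_j : ℕ) + 1), k[X] ⧸ Ideal.span {p ^ ((x.1 : ℕ) + 1)}) →ₗ[k[X]]
      (S ((i : ℕ) + 1) →₀ (k[X] ⧸ Ideal.span {p})) :=
  DirectSum.toModule _ _ _ (gMap p S i)

theorem phiMap_of (p : k[X]) {n : ℕ} (S : ℕ → Type v) (i : Fin n)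
    (x : Σ _j : Fin n, S ((_j : ℕ) + 1)) (c : k[X] ⧸ Ideal.span {p ^ ((x.1 : ℕ) + 1)}) :
    phiMap p S i (DirectSum.of _ x c) = gMap p S i x c := by
  rw [phiMap, ← DirectSum.lof_eq_of k[X], DirectSum.toModule_lof]

theorem gMap_same (p : k[X]) {n : ℕ} (S : ℕ → Type v) (i : Fin n) (s : S ((i : ℕ) + 1))
    (c : k[X] ⧸ Ideal.span {p ^ ((i : ℕ) + 1)}) :
    gMap p S i ⟨i, s⟩ c = Finsupp.single s (redMap p (i : ℕ) c) := by
  rw [gMap, dif_pos rfl]; rfl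

theorem gMap_ne (p : k[X]) {n : ℕ} (S : ℕ → Type v) (i : Fin n)
    (x : Σ _j : Fin n, S ((_j : ℕ) + 1)) (h : x.1 ≠ i) :
    gMap p S i x = 0 := dif_neg h

theorem of_smul {ι : Type w} [DecidableEq ι] (C : ι → Type*) [∀ i, AddCommGroup (C i)]
    [∀ i, Module k[X] (C i)] (r : k[X]) (x : ι) (c : C x) :
    DirectSum.of C x (r • c) = r • DirectSum.of C x c := by
  rw [← DirectSum.lof_eq_of k[X], map_smul, DirectSum.lof_eq_of]

noncomputable def kerN (p : k[X]) {n : ℕ} (S : ℕ → Type v) (j : ℕ) :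
    Submodule k[X] (⨁ x : Σ _j : Fin n, S ((_j : ℕ) + 1), k[X] ⧸ Ideal.span {p ^ ((x.1 : ℕ) + 1)}) :=
  Submodule.torsionBy k[X] _ (p ^ j)

noncomputable def wN (p : k[X]) {n : ℕ} (S : ℕ → Type v) (j : ℕ) :
    Submodule k[X] (⨁ x : Σ _j : Fin n, S ((_j : ℕ) + 1), k[X] ⧸ Ideal.span {p ^ ((x.1 : ℕ) + 1)}) :=
  kerN p S (j - 1) ⊔ (kerN p S (j + 1)).map (LinearMap.lsmul k[X] _ p)

theorem phiMap_apply_eq (p : k[X]) {n : ℕ} (S : ℕ → Type v) (i : Fin n)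
    (v : ⨁ x : Σ _j : Fin n, S ((_j : ℕ) + 1), k[X] ⧸ Ideal.span {p ^ ((x.1 : ℕ) + 1)})
    (s : S ((i : ℕ) + 1)) :
    (phiMap p S i v) s = redMap p (i : ℕ) (v ⟨i, s⟩) := by
  conv_lhs => rw [← DirectSum.sum_support_of v]
  rw [map_sum, Finsupp.finset_sum_apply]
  rw [Finset.sum_eq_single (⟨i, s⟩ : Σ _j : Fin n, S ((_j : ℕ) + 1))]
  · rw [phiMap_of, gMap_same, Finsupp.single_eq_same]
  · rintro ⟨a, t⟩ _ hb
    by_cases h : a = i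
    · subst h
      have hts : t ≠ s := fun h => hb (by rw [h])
      rw [phiMap_of, gMap_same, Finsupp.single_eq_of_ne' hts]
    · rw [phiMap_of, gMap_ne p S i _ h, LinearMap.zero_apply, Finsupp.coe_zero, Pi.zero_apply]
  · intro h
    rw [DFinsupp.notMem_support_iff.mp h, map_zero]
    simp
theorem mem_wN_of (p : k[X]) (hp : Prime p) {n : ℕ} (S : ℕ → Type v) (i : Fin n)
    (a : Fin n) (t : S ((a : ℕ) + 1)) (c : k[X] ⧸ Ideal.span {p ^ ((a : ℕ) + 1)})
    (hc : p ^ ((i : ℕ) + 1) • c = 0) (hr : a = i → redMap p (a : ℕ) c = 0) :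
    DirectSum.of _ (⟨a, t⟩ : Σ _j : Fin n, S ((_j : ℕ) + 1)) c ∈ wN p S ((i : ℕ) + 1) := by
  obtain ⟨r, rfl⟩ := Ideal.Quotient.mk_surjective c
  rcases eq_or_ne a i with h | hne
  · -- a = i : use the reduction hypothesis
    subst h
    have h0 := hr rfl
    rw [redMap_mk, Ideal.Quotient.eq_zero_iff_mem] at h0
    obtain ⟨t', rfl⟩ := Ideal.mem_span_singleton.mp h0
    refine Submodule.mem_sup_right (Submodule.mem_map.mpr
      ⟨DirectSum.of _ (⟨a, t⟩ : Σ _j : Fin n, S ((_j : ℕ) + 1)) (Ideal.Quotient.mk _ t'), ?_, ?_⟩)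
    · rw [kerN, Submodule.mem_torsionBy_iff, ← of_smul, qsmul]
      rw [show (Ideal.Quotient.mk (Ideal.span {p ^ ((a : ℕ) + 1)})) (p ^ ((a:ℕ)+1+1) * t') = 0 from
        Ideal.Quotient.eq_zero_iff_mem.mpr (Ideal.mem_span_singleton.mpr
          (Dvd.dvd.mul_right (pow_dvd_pow p (by omega)) t'))]
      rw [map_zero]
    · rw [LinearMap.lsmul_apply, ← of_smul, qsmul]
  · rcases lt_or_gt_of_ne (fun h => hne (Fin.ext h) : (a : ℕ) ≠ (i : ℕ)) with hlt | hgt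
    · -- a < i : torsion part
      refine Submodule.mem_sup_left ?_
      rw [kerN, Submodule.mem_torsionBy_iff, ← of_smul, qsmul]
      rw [show (Ideal.Quotient.mk (Ideal.span {p ^ ((a : ℕ) + 1)}))
          (p ^ ((i:ℕ)+1-1) * r) = 0 from
        Ideal.Quotient.eq_zero_iff_mem.mpr (Ideal.mem_span_singleton.mpr
          (Dvd.dvd.mul_right (pow_dvd_pow p (by omega)) r))]
      rw [map_zero]
    · -- a > i : divisibility via torsion hypothesis
      rw [qsmul, Ideal.Quotient.eq_zero_iff_mem] at hc
      obtain ⟨d, hd⟩ := Ideal.mem_span_singleton.mp hc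
      have hsplit : p ^ ((a : ℕ) + 1) = p ^ ((i : ℕ) + 1) * p ^ ((a : ℕ) - (i : ℕ)) := by
        rw [← pow_add]; congr 1; omega
      rw [hsplit, mul_assoc] at hd
      have hr' : r = p ^ ((a : ℕ) - (i : ℕ)) * d :=
        mul_left_cancel₀ (pow_ne_zero _ hp.ne_zero) hd
      have hsplit2 : p ^ ((a : ℕ) - (i : ℕ)) = p * p ^ ((a : ℕ) - (i : ℕ) - 1) := by
        rw [← pow_succ']; congr 1; omega
      refine Submodule.mem_sup_right (Submodule.mem_map.mpr
        ⟨DirectSum.of _ (⟨a, t⟩ : Σ _j : Fin n, S ((_j : ℕ) + 1))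
          (Ideal.Quotient.mk _ (p ^ ((a : ℕ) - (i : ℕ) - 1) * d)), ?_, ?_⟩)
      · rw [kerN, Submodule.mem_torsionBy_iff, ← of_smul, qsmul]
        rw [show (Ideal.Quotient.mk (Ideal.span {p ^ ((a : ℕ) + 1)}))
            (p ^ ((i:ℕ)+1+1) * (p ^ ((a : ℕ) - (i : ℕ) - 1) * d)) = 0 from
          Ideal.Quotient.eq_zero_iff_mem.mpr (Ideal.mem_span_singleton.mpr
            ⟨d, by rw [← mul_assoc, ← pow_add]; congr 2; omega⟩)]
        rw [map_zero]
      · rw [LinearMap.lsmul_apply, ← of_smul, qsmul, hr', hsplit2, mul_assoc]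

theorem ker_sub (p : k[X]) (hp : Prime p) {n : ℕ} (S : ℕ → Type v) (i : Fin n)
    (v : ⨁ x : Σ _j : Fin n, S ((_j : ℕ) + 1), k[X] ⧸ Ideal.span {p ^ ((x.1 : ℕ) + 1)})
    (hv : v ∈ kerN p S ((i : ℕ) + 1)) (hphi : phiMap p S i v = 0) :
    v ∈ wN p S ((i : ℕ) + 1) := by
  have hred : ∀ s : S ((i : ℕ) + 1), redMap p (i : ℕ) (v ⟨i, s⟩) = 0 := by
    intro s
    rw [← phiMap_apply_eq, hphi, Finsupp.coe_zero, Pi.zero_apply]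
  rw [kerN, Submodule.mem_torsionBy_iff] at hv
  have hcomp : ∀ x : Σ _j : Fin n, S ((_j : ℕ) + 1), p ^ ((i : ℕ) + 1) • v x = 0 := by
    intro x
    calc p ^ ((i : ℕ) + 1) • v x = (p ^ ((i : ℕ) + 1) • v) x := rfl
    _ = 0 := by rw [hv]; rfl
  rw [← DirectSum.sum_support_of v]
  refine Submodule.sum_mem _ fun x _ => ?_
  obtain ⟨a, t⟩ := x
  exact mem_wN_of p hp S i a t (v ⟨a, t⟩) (hcomp ⟨a, t⟩)
    (fun h => by subst h; exact hred t)

theorem wN_le_ker (p : k[X]) (hp : Prime p) {n : ℕ} (S : ℕ → Type v) (i : Fin n) :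
    wN p S ((i : ℕ) + 1) ≤ LinearMap.ker (phiMap p S i) := by
  refine sup_le ?_ ?_
  · intro v hv
    rw [kerN, Submodule.mem_torsionBy_iff] at hv
    rw [LinearMap.mem_ker]
    ext s
    rw [phiMap_apply_eq, Finsupp.coe_zero, Pi.zero_apply]
    refine redMap_eq_zero p hp _ _ ?_
    calc p ^ ((i:ℕ)+1-1) • v ⟨i, s⟩ = (p ^ ((i:ℕ)+1-1) • v) ⟨i, s⟩ := rfl
    _ = 0 := by rw [hv]; rfl
  · rintro _ ⟨u, _, rfl⟩
    rw [LinearMap.mem_ker, LinearMap.lsmul_apply, map_smul]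
    ext s
    rw [Finsupp.smul_apply, Finsupp.coe_zero, Pi.zero_apply]
    obtain ⟨r, hr⟩ := Ideal.Quotient.mk_surjective ((phiMap p S i u) s)
    rw [← hr, qsmul, Ideal.Quotient.eq_zero_iff_mem]
    exact Ideal.mem_span_singleton.mpr (Dvd.intro r rfl)

theorem phi_surj (p : k[X]) {n : ℕ} (S : ℕ → Type v) (i : Fin n)
    (w : S ((i : ℕ) + 1) →₀ (k[X] ⧸ Ideal.span {p})) :
    ∃ v ∈ kerN p S ((i : ℕ) + 1), phiMap p S i v = w := by
  induction w using Finsupp.induction_linear with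
  | zero => exact ⟨0, Submodule.zero_mem _, map_zero _⟩
  | add f g hf hg =>
    obtain ⟨v1, hv1, hv1'⟩ := hf
    obtain ⟨v2, hv2, hv2'⟩ := hg
    exact ⟨v1 + v2, Submodule.add_mem _ hv1 hv2, by rw [map_add, hv1', hv2']⟩
  | single s c =>
    obtain ⟨r, rfl⟩ := Ideal.Quotient.mk_surjective c
    refine ⟨DirectSum.of _ (⟨i, s⟩ : Σ _j : Fin n, S ((_j : ℕ) + 1)) (Ideal.Quotient.mk _ r),
      ?_, ?_⟩
    · rw [kerN, Submodule.mem_torsionBy_iff, ← of_smul, qsmul]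
      rw [show (Ideal.Quotient.mk (Ideal.span {p ^ ((i : ℕ) + 1)})) (p ^ ((i:ℕ)+1) * r) = 0 from
        Ideal.Quotient.eq_zero_iff_mem.mpr (Ideal.mem_span_singleton.mpr (Dvd.intro r rfl))]
      rw [map_zero]
    · rw [phiMap_of, gMap_same, redMap_mk]
section GenTransport
variable {R : Type w} [CommRing R] {M : Type*} [AddCommGroup M] [Module R M]
  {N : Type*} [AddCommGroup N] [Module R N]

theorem map_torsionBy' (e : M ≃ₗ[R] N) (a : R) :
    (Submodule.torsionBy R M a).map (e : M →ₗ[R] N) = Submodule.torsionBy R N a := by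
  ext x
  simp only [Submodule.mem_map, Submodule.mem_torsionBy_iff]
  constructor
  · rintro ⟨m, hm, rfl⟩
    rw [← map_smul, hm, map_zero]
  · intro hx
    exact ⟨e.symm x, by rw [← map_smul, hx, map_zero], e.apply_symm_apply x⟩

/-- the generic `W` submodule -/
noncomputable def wT (p : R) (j : ℕ) : Submodule R M :=
  Submodule.torsionBy R M (p ^ (j - 1))
    ⊔ (Submodule.torsionBy R M (p ^ (j + 1))).map (LinearMap.lsmul R M p)

theorem map_wT (e : M ≃ₗ[R] N) (p : R) (j : ℕ) :
    (wT p j).map (e : M →ₗ[R] N) = wT p j := by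
  rw [wT, wT, Submodule.map_sup, map_torsionBy']
  congr 1
  rw [← Submodule.map_comp,
    show ((e : M →ₗ[R] N) ∘ₗ LinearMap.lsmul R M p)
        = (LinearMap.lsmul R N p) ∘ₗ (e : M →ₗ[R] N) from LinearMap.ext fun x => map_smul e p x,
    Submodule.map_comp, map_torsionBy']

/-- the generic quotient -/
noncomputable abbrev qT (M : Type*) [AddCommGroup M] [Module R M] (p : R) (j : ℕ) : Type _ :=
  Submodule.torsionBy R M (p ^ j) ⧸
    (wT p j).comap (Submodule.torsionBy R M (p ^ j)).subtype

noncomputable def kerTEquiv (e : M ≃ₗ[R] N) (p : R) (j : ℕ) :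
    Submodule.torsionBy R M (p ^ j) ≃ₗ[R] Submodule.torsionBy R N (p ^ j) :=
  (e.submoduleMap _).trans (LinearEquiv.ofEq _ _ (map_torsionBy' e (p ^ j)))

theorem map_comapW (e : M ≃ₗ[R] N) (p : R) (j : ℕ) :
    (((wT p j).comap (Submodule.torsionBy R M (p ^ j)).subtype).map (kerTEquiv e p j).toLinearMap)
      = (wT p j).comap (Submodule.torsionBy R N (p ^ j)).subtype := by
  ext ⟨v, hv⟩
  simp only [Submodule.mem_map, Submodule.mem_comap, Submodule.subtype_apply]
  constructor
  · rintro ⟨⟨u, hu⟩, huW, heq⟩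
    have hval : e u = v := congrArg Subtype.val heq
    rw [← map_wT e p j]
    exact hval ▸ Submodule.mem_map_of_mem huW
  · intro hvW
    rw [← map_wT e p j] at hvW
    obtain ⟨u, huW, hu⟩ := hvW
    have humem : u ∈ Submodule.torsionBy R M (p ^ j) := by
      rw [← map_torsionBy' e (p ^ j)] at hv
      obtain ⟨u1, hu1, hu1'⟩ := hv
      simp only [LinearEquiv.coe_coe] at hu1' hu
      rwa [show u1 = u from e.injective (by rw [hu1', hu])] at hu1
    exact ⟨⟨u, humem⟩, huW, Subtype.ext hu⟩

/-- transport of the invariant quotient along a linear equivalence -/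
noncomputable def qTEquiv (e : M ≃ₗ[R] N) (p : R) (j : ℕ) :
    qT M p j ≃ₗ[R] qT N p j :=
  Submodule.Quotient.equiv _ _ (kerTEquiv e p j) (map_comapW e p j)

/-- upgrading an `R`-linear equivalence to an `R/I`-linear one -/
noncomputable def upgradeKLinear {I : Ideal R} {A : Type*} {B : Type*}
    [AddCommGroup A] [Module R A] [AddCommGroup B] [Module R B]
    [Module (R ⧸ I) A] [Module (R ⧸ I) B]
    (E : A ≃ₗ[R] B)
    (hA : ∀ (r : R) (x : A), Ideal.Quotient.mk I r • x = r • x)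
    (hB : ∀ (r : R) (x : B), Ideal.Quotient.mk I r • x = r • x) :
    A ≃ₗ[R ⧸ I] B :=
  { toFun := E
    map_add' := map_add E
    map_smul' := by
      intro c x
      obtain ⟨r, rfl⟩ := Ideal.Quotient.mk_surjective c
      rw [RingHom.id_apply, hA, hB]
      exact map_smul E r x
    invFun := E.symm
    left_inv := E.left_inv
    right_inv := E.right_inv }
end GenTransport
section Nside
variable {k : Type u} [Field k]

theorem wN_eq_wT (p : k[X]) (n : ℕ) (S : ℕ → Type v) (j : ℕ) :
    wN (n := n) p S j = wT (M := ⨁ x : Σ _j : Fin n, S ((_j : ℕ) + 1), k[X] ⧸ Ideal.span {p ^ ((x.1 : ℕ) + 1)}) p j := rfl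

theorem hkerphi (p : k[X]) (hp : Prime p) {n : ℕ} (S : ℕ → Type v) (i : Fin n) :
    LinearMap.ker ((phiMap p S i).comp (kerN p S ((i : ℕ) + 1)).subtype)
      = (wT (M := ⨁ x : Σ _j : Fin n, S ((_j : ℕ) + 1), k[X] ⧸ Ideal.span {p ^ ((x.1 : ℕ) + 1)}) p ((i : ℕ) + 1)).comap (kerN p S ((i : ℕ) + 1)).subtype := by
  rw [← wN_eq_wT p n S]
  ext ⟨v, hv⟩
  simp only [LinearMap.mem_ker, LinearMap.comp_apply, Submodule.subtype_apply,
    Submodule.mem_comap]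
  constructor
  · intro h
    exact ker_sub p hp S i v hv h
  · intro h
    exact wN_le_ker p hp S i h

theorem hsurjphi (p : k[X]) {n : ℕ} (S : ℕ → Type v) (i : Fin n) :
    Function.Surjective ((phiMap p S i).comp (kerN p S ((i : ℕ) + 1)).subtype) := by
  intro w
  obtain ⟨v, hv, hv'⟩ := phi_surj p S i w
  exact ⟨⟨v, hv⟩, hv'⟩

noncomputable instance kerNAddCommGroup (p : k[X]) {n : ℕ} (S : ℕ → Type v) (j : ℕ) :
    AddCommGroup (kerN (n := n) p S j) :=
  @Submodule.addCommGroup k[X]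
    (⨁ x : Σ _j : Fin n, S ((_j : ℕ) + 1), k[X] ⧸ Ideal.span {p ^ ((x.1 : ℕ) + 1)}) _
    inferInstance inferInstance (kerN p S j)
/-- the `N`-side computation of the invariant quotient -/
noncomputable def ENequiv (p : k[X]) (hp : Prime p) {n : ℕ} (S : ℕ → Type v) (i : Fin n) :
    qT (⨁ x : Σ _j : Fin n, S ((_j : ℕ) + 1), k[X] ⧸ Ideal.span {p ^ ((x.1 : ℕ) + 1)})
        p ((i : ℕ) + 1)
      ≃ₗ[k[X]] (S ((i : ℕ) + 1) →₀ (k[X] ⧸ Ideal.span {p})) :=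
  (Submodule.quotEquivOfEq _ _ (hkerphi p hp S i).symm).trans
    (((phiMap p S i).comp (kerN p S ((i : ℕ) + 1)).subtype).quotKerEquivOfSurjective
      (hsurjphi p S i))

theorem hB_finsupp (p : k[X]) (T : Type*) (r : k[X]) (w : T →₀ (k[X] ⧸ Ideal.span {p})) :
    Ideal.Quotient.mk (Ideal.span {p}) r • w = r • w := by
  ext s
  rw [Finsupp.smul_apply, Finsupp.smul_apply]
  obtain ⟨t, ht⟩ := Ideal.Quotient.mk_surjective (w s)
  rw [← ht, qsmul, smul_eq_mul, ← map_mul]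
end Nside

/-- **Well-definedness of the invariants.**  Let `V` be an arbitrary `k`-vector
space and `f` an endomorphism of `V` whose annihilator polynomial is `a_f(x) = p(x)^n` with
`p(x)` monic irreducible.  If `V`, regarded as a `k[x]`-module via `q(x) • v = q(f)(v)` (the
type synonym `Module.AEval' f`), is isomorphic to `⊕_{i=1}^{n} (k[x]/(p(x)^i))^{(S i)}` for
some index sets `S 1, …, S n`, then for each `1 ≤ i ≤ n` the cardinality of `S i` equals
`ν_i(V, p(f))`; in particular the multiplicities in any such decomposition are independent of
the decomposition chosen. -/
theorem stmt_10 {k : Type u} [Field k] {V : Type v} [AddCommGroup V] [Module k V]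
    (f : Module.End k V) (p : k[X]) (n : ℕ)
    (hmonic : p.Monic) (hirr : Irreducible p)
    (hmin : minpoly k f = p ^ n)
    (S : ℕ → Type v)
    (e : Module.AEval' f ≃ₗ[k[X]]
      ⨁ x : Σ _i : Fin n, S ((_i : ℕ) + 1), k[X] ⧸ Ideal.span {p ^ ((x.1 : ℕ) + 1)}) :
    ∀ i : Fin n, Cardinal.mk (S ((i : ℕ) + 1)) = nu f p ((i : ℕ) + 1) := by
  intro i
  have hp : Prime p := hirr.prime
  haveI : (Ideal.span {p}).IsMaximal := PrincipalIdealRing.isMaximal_of_irreducible hirr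
  let E : Qmod f p ((i : ℕ) + 1) ≃ₗ[k[X]] (S ((i : ℕ) + 1) →₀ (k[X] ⧸ Ideal.span {p})) :=
    (qTEquiv (N := ⨁ x : Σ _i : Fin n, S ((_i : ℕ) + 1), k[X] ⧸ Ideal.span {p ^ ((x.1 : ℕ) + 1)}) e p ((i : ℕ) + 1)).trans (ENequiv p hp S i)
  let EK : Qmod f p ((i : ℕ) + 1) ≃ₗ[k[X] ⧸ Ideal.span {p}]
      (S ((i : ℕ) + 1) →₀ (k[X] ⧸ Ideal.span {p})) :=
    upgradeKLinear (I := Ideal.span {p}) E (fun r x => rfl) (hB_finsupp p _)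
  have hrk := EK.lift_rank_eq
  rw [rank_finsupp_self] at hrk
  rw [nu]
  simp only [Cardinal.lift_lift] at hrk
  exact Cardinal.lift_inj.mp hrk.symm
end
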